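/- Under Assumptions (A1) and (A3), define for ε, δ > 0 and t ≥ 0: 𝒮₂^{ε,δ}(t) := ∫₀ᵗ ( (1/ε)·κ'(x(π_δ(s)))·κ(x(π_δ(s)))·(s − π_δ(s)) − (δ/(2ε))·κ'(x(s))·κ(x(s)) )·E(s,t) ds. Then for every integer p ≥ 1 there exists a constant C > 0, independent of t, ε and δ, such that |𝒮₂^{ε,δ}(t)|^p ≤ C·δ^{2p}/ε^p for all ε, δ ∈ (0,1) and all t ≥ 0. -/

import Mathlib

open MeasureTheory Set Filter intervalIntegral Real Topology

/-- The sampling map `π_δ(t) = δ·⌊t/δ⌋`. -/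
noncomputable def piD (δ t : ℝ) : ℝ := δ * (⌊t / δ⌋ : ℤ)

lemma piD_le {δ : ℝ} (hδ : 0 < δ) (s : ℝ) : piD δ s ≤ s := by
  have := Int.floor_le (s / δ)
  unfold piD
  calc δ * (⌊s / δ⌋ : ℤ) ≤ δ * (s / δ) := by nlinarith
  _ = s := by field_simp

lemma lt_piD_add {δ : ℝ} (hδ : 0 < δ) (s : ℝ) : s < piD δ s + δ := by
  have h1 := Int.lt_floor_add_one (s / δ)
  have h0 : δ * (s / δ) = s := by field_simp
  unfold piD
  nlinarith [mul_lt_mul_of_pos_left h1 hδ]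

lemma piD_nonneg {δ : ℝ} (hδ : 0 < δ) {s : ℝ} (hs : 0 ≤ s) : 0 ≤ piD δ s := by
  have : (0:ℤ) ≤ ⌊s / δ⌋ := Int.floor_nonneg.2 (by positivity)
  have : (0:ℝ) ≤ (⌊s / δ⌋ : ℤ) := by exact_mod_cast this
  unfold piD
  positivity

lemma piD_monotone {δ : ℝ} (hδ : 0 < δ) : Monotone (piD δ) := by
  intro u v huv
  unfold piD
  have h : ⌊u / δ⌋ ≤ ⌊v / δ⌋ := Int.floor_le_floor (by gcongr)
  have h2 : ((⌊u / δ⌋ : ℤ) : ℝ) ≤ ((⌊v / δ⌋ : ℤ) : ℝ) := by exact_mod_cast h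
  nlinarith

lemma measurable_piD {δ : ℝ} (hδ : 0 < δ) : Measurable (piD δ) :=
  (piD_monotone hδ).measurable

lemma piD_zero (δ : ℝ) : piD δ 0 = 0 := by
  unfold piD; simp

/-- local constancy of `piD` away from lattice points -/
lemma piD_eventually_const {δ s : ℝ} (hδ : 0 < δ) (h : piD δ s ≠ s) :
    ∀ᶠ u in 𝓝 s, piD δ u = piD δ s := by
  have h1 : piD δ s < s := lt_of_le_of_ne (piD_le hδ s) h
  have h2 : s < piD δ s + δ := lt_piD_add hδ s
  filter_upwards [Ioo_mem_nhds h1 h2] with u hu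
  unfold piD at *
  have hk : ⌊u / δ⌋ = ⌊s / δ⌋ := by
    rw [Int.floor_eq_iff]
    constructor
    · rw [le_div_iff₀ hδ]; nlinarith [hu.1]
    · rw [div_lt_iff₀ hδ]; push_cast; nlinarith [hu.2]
  rw [hk]

/-- bound on `ψ` near a lattice point -/
lemma psi_near_lattice {δ s u : ℝ} (hδ : 0 < δ) (hs : piD δ s = s) (hu : |u - s| < δ) :
    |(u - piD δ u) * (u - piD δ u - δ) / 2| ≤ δ / 2 * |u - s| := by
  have hm : s = δ * (⌊s / δ⌋ : ℤ) := hs.symm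
  rcases le_or_gt s u with hle | hlt
  · have h0 : (0:ℝ) ≤ u - s := by linarith
    have h1 : u - s < δ := by rw [abs_of_nonneg h0] at hu; exact hu
    have hpu : piD δ u = s := by
      unfold piD
      have hk : ⌊u / δ⌋ = ⌊s / δ⌋ := by
        rw [Int.floor_eq_iff]
        constructor
        · rw [le_div_iff₀ hδ]; nlinarith
        · rw [div_lt_iff₀ hδ]; push_cast; nlinarith
      rw [hk, ← hm]
    rw [hpu, abs_of_nonneg h0,
      abs_of_nonpos (show (u - s) * (u - s - δ) / 2 ≤ 0 by nlinarith)]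
    nlinarith
  · have h0 : u - s ≤ 0 := by linarith
    have h1 : s - δ ≤ u := by rw [abs_of_nonpos h0] at hu; linarith
    have hpu : piD δ u = s - δ := by
      unfold piD
      have hk : ⌊u / δ⌋ = ⌊s / δ⌋ - 1 := by
        rw [Int.floor_eq_iff]
        constructor
        · rw [le_div_iff₀ hδ]; push_cast; nlinarith
        · rw [div_lt_iff₀ hδ]; push_cast; nlinarith
      rw [hk]; push_cast; nlinarith [hm]
    rw [hpu, abs_of_nonpos h0,
      abs_of_nonpos (show (u - (s - δ)) * (u - (s - δ) - δ) / 2 ≤ 0 by nlinarith)]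
    nlinarith

/-- `|ψ| ≤ δ²/8` globally -/
lemma psi_global {δ : ℝ} (u : ℝ) (hδ : 0 < δ) :
    |(u - piD δ u) * (u - piD δ u - δ) / 2| ≤ δ ^ 2 / 8 := by
  have h1 : piD δ u ≤ u := piD_le hδ u
  have h2 : u < piD δ u + δ := lt_piD_add hδ u
  rw [abs_of_nonpos (by nlinarith)]
  nlinarith [sq_nonneg (δ - 2*(u - piD δ u))]

/-- deriv bound from a pointwise Lipschitz-type bound -/
lemma abs_deriv_le_of_slope_bound {F : ℝ → ℝ} {y : ℝ} (hF : DifferentiableAt ℝ F y)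
    {B : ℝ → ℝ} (hB : ContinuousAt B y) (h : ∀ b : ℝ, |F b - F y| ≤ B b * |b - y|) :
    |deriv F y| ≤ B y := by
  have hs := hasDerivAt_iff_tendsto_slope.1 hF.hasDerivAt
  have h1 : Tendsto (fun b => |slope F y b|) (𝓝[≠] y) (𝓝 |deriv F y|) := hs.abs
  have h2 : Tendsto B (𝓝[≠] y) (𝓝 (B y)) := hB.continuousWithinAt.tendsto
  refine le_of_tendsto_of_tendsto h1 h2 ?_
  filter_upwards [self_mem_nhdsWithin] with b hb
  have hby : b - y ≠ 0 := sub_ne_zero.2 hb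
  show |slope F y b| ≤ B b
  rw [slope_def_field, abs_div, div_le_iff₀ (abs_pos.2 hby)]
  · exact h b

lemma alg_id (Cg M Cstar Lg δ ε : ℝ) (hε : 0 < ε) :
    (1/ε) * (Cg * (δ^2/8) + Cg * (δ^2/8) * M * Cstar) + (δ/(2*ε)) * (Lg * δ * Cstar)
      = (Cg/8 * (1 + M * Cstar) + Lg * Cstar / 2) * δ^2 / ε := by
  have hεne : ε ≠ 0 := ne_of_gt hε
  field_simp

lemma S2_bound
    (A g : ℝ → ℝ) (t δ ε Cg Lg M Cstar : ℝ)
    (ht : 0 ≤ t) (hδ : 0 < δ) (hε : 0 < ε)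
    (hCg : 0 ≤ Cg) (hLg : 0 ≤ Lg) (hM : 0 ≤ M) (hCs : 0 ≤ Cstar)
    (hAc : ContinuousOn A (Ici 0))
    (hAbd : ∀ u : ℝ, 0 ≤ u → |A u| ≤ M)
    (hgc : ContinuousOn g (Ici 0))
    (hgbd : ∀ s : ℝ, |g s| ≤ Cg)
    (hglip : ∀ u v : ℝ, 0 ≤ u → 0 ≤ v → |g u - g v| ≤ Lg * |u - v|)
    (hEint : (∫ s in (0:ℝ)..t, Real.exp (∫ u in s..t, A u)) ≤ Cstar) :
    |∫ s in (0:ℝ)..t, ((1/ε) * g (piD δ s) * (s - piD δ s) - δ/(2*ε) * g s) *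
        Real.exp (∫ u in s..t, A u)|
      ≤ (Cg/8 * (1 + M * Cstar) + Lg * Cstar / 2) * δ^2 / ε := by
  classical
  set E : ℝ → ℝ := fun s => Real.exp (∫ u in s..t, A u) with hE
  set ψ : ℝ → ℝ := fun s => (s - piD δ s) * (s - piD δ s - δ) / 2 with hψ
  set H : ℝ → ℝ := fun s => g (piD δ s) * ψ s with hH
  set term1 : ℝ → ℝ := fun s => g (piD δ s) * (s - piD δ s - δ/2) * E s with hterm1
  set HaE : ℝ → ℝ := fun s => H s * A s * E s with hHaE
  set dif : ℝ → ℝ := fun s => (g (piD δ s) - g s) * E s with hdif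
  set F' : ℝ → ℝ := fun s => term1 s - HaE s with hF'
  have hIccIci : Icc (0:ℝ) t ⊆ Ici 0 := fun z hz => hz.1
  -- measurability of g ∘ piD
  have hgπ_meas : Measurable (fun s => g (piD δ s)) := by
    have hrw : (fun s => g (piD δ s)) = (fun k : ℤ => g (δ * k)) ∘ (fun s : ℝ => ⌊s / δ⌋) := by
      funext s; simp [Function.comp, piD]
    rw [hrw]
    exact measurable_from_top.comp (measurable_id.div_const δ).floor
  -- integrability of A on subintervals of [0,t]
  have hAint : ∀ u v : ℝ, u ∈ Icc (0:ℝ) t → v ∈ Icc (0:ℝ) t →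
      IntervalIntegrable A volume u v := by
    intro u v hu hv
    apply ContinuousOn.intervalIntegrable
    apply hAc.mono
    intro z hz
    rcases le_total u v with h | h
    · rw [uIcc_of_le h] at hz; exact le_trans hu.1 hz.1
    · rw [uIcc_of_ge h] at hz; exact le_trans hv.1 hz.1
  set I0 : ℝ := ∫ u in (0:ℝ)..t, A u with hI0
  have hErep : ∀ s ∈ Icc (0:ℝ) t, (∫ u in s..t, A u) = I0 - ∫ u in (0:ℝ)..s, A u := by
    intro s hs
    rw [eq_sub_iff_add_eq, hI0, add_comm]
    exact intervalIntegral.integral_add_adjacent_intervals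
      (hAint 0 s ⟨le_rfl, ht⟩ hs) (hAint s t hs ⟨ht, le_rfl⟩)
  have hEc : ContinuousOn E (Icc 0 t) := by
    have hP : ContinuousOn (fun s => ∫ u in (0:ℝ)..s, A u) (Icc 0 t) := by
      have h1 : IntegrableOn A (uIcc 0 t) volume := by
        rw [uIcc_of_le ht]
        exact (intervalIntegrable_iff_integrableOn_Icc_of_le ht).1
          (hAint 0 t ⟨le_rfl, ht⟩ ⟨ht, le_rfl⟩)
      have := intervalIntegral.continuousOn_primitive_interval h1
      rwa [uIcc_of_le ht] at this
    apply Real.continuous_exp.comp_continuousOn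
    exact (continuousOn_const.sub hP).congr hErep
  have hEpos : ∀ s : ℝ, 0 < E s := fun s => Real.exp_pos _
  have hE_int : IntervalIntegrable E volume 0 t :=
    ContinuousOn.intervalIntegrable (by rwa [uIcc_of_le ht])
  have hE_aesm : AEStronglyMeasurable E (volume.restrict (Ioc 0 t)) :=
    (hEc.mono Ioc_subset_Icc_self).aestronglyMeasurable measurableSet_Ioc
  -- continuity of H
  have hHcont : Continuous H := by
    rw [continuous_iff_continuousAt]
    intro s
    by_cases hps : piD δ s = s
    · have hH0 : H s = 0 := by simp [hH, hψ, hps]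
      rw [ContinuousAt, hH0]
      apply squeeze_zero_norm' (a := fun u => Cg * (δ/2) * |u - s|)
      · filter_upwards [Metric.ball_mem_nhds s hδ] with u hu
        have huδ : |u - s| < δ := by have h := Metric.mem_ball.1 hu; rwa [Real.dist_eq] at h
        have hb := psi_near_lattice hδ hps huδ
        calc ‖H u‖ = |g (piD δ u)| * |(u - piD δ u) * (u - piD δ u - δ) / 2| := by
              rw [hH]; exact abs_mul _ _
        _ ≤ Cg * (δ/2 * |u - s|) :=
              mul_le_mul (hgbd _) hb (abs_nonneg _) hCg
        _ = Cg * (δ/2) * |u - s| := by ring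
      · have h0 : Continuous (fun u : ℝ => |u - s|) :=
          (continuous_id.sub continuous_const).abs
        have h1 : Tendsto (fun u : ℝ => |u - s|) (𝓝 s) (𝓝 0) := by
          have := h0.tendsto s
          simpa using this
        simpa using h1.const_mul (Cg * (δ/2))
    · have hev := piD_eventually_const hδ hps
      have hpoly : ContinuousAt
          (fun u => g (piD δ s) * ((u - piD δ s) * (u - piD δ s - δ) / 2)) s := by
        fun_prop
      apply hpoly.congr
      filter_upwards [hev] with u hu
      rw [hH, hψ]
      simp only []
      rw [hu]
  -- derivative of H off lattice
  have hH_deriv : ∀ s : ℝ, piD δ s ≠ s →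
      HasDerivAt H (g (piD δ s) * (s - piD δ s - δ/2)) s := by
    intro s hps
    have hev := piD_eventually_const hδ hps
    set c := piD δ s with hc
    have h2 : HasDerivAt (fun u : ℝ => u - c) 1 s := (hasDerivAt_id s).sub_const c
    have h3 : HasDerivAt (fun u : ℝ => u - c - δ) 1 s :=
      ((hasDerivAt_id s).sub_const c).sub_const δ
    have h4 : HasDerivAt (fun u : ℝ => (u - c) * (u - c - δ) / 2) (s - c - δ/2) s := by
      have := (h2.mul h3).div_const 2
      exact this.congr_deriv (by ring)
    have hpoly : HasDerivAt (fun u => g c * ((u - c) * (u - c - δ) / 2))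
        (g c * (s - c - δ/2)) s := h4.const_mul (g c)
    refine hpoly.congr_of_eventuallyEq ?_
    filter_upwards [hev] with u hu
    rw [hH, hψ]
    simp only []
    rw [hu]
  -- derivative of E
  have hE_deriv : ∀ s ∈ Ioo (0:ℝ) t, HasDerivAt E (-A s * E s) s := by
    intro s hs
    have hsIcc : s ∈ Icc (0:ℝ) t := ⟨hs.1.le, hs.2.le⟩
    have hP : HasDerivAt (fun u => ∫ v in (0:ℝ)..u, A v) (A s) s :=
      intervalIntegral.integral_hasDerivAt_right
        (hAint 0 s ⟨le_rfl, ht⟩ hsIcc)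
        (ContinuousOn.stronglyMeasurableAtFilter isOpen_Ioi (hAc.mono Ioi_subset_Ici_self)
          s hs.1)
        (hAc.continuousAt (Ici_mem_nhds hs.1))
    have hexp : HasDerivAt (fun u => Real.exp (I0 - ∫ v in (0:ℝ)..u, A v))
        (-A s * Real.exp (I0 - ∫ v in (0:ℝ)..s, A v)) s := by
      have := ((hasDerivAt_const s I0).sub hP).exp
      exact this.congr_deriv (by simp only [Pi.sub_apply]; ring)
    have heq : E s = Real.exp (I0 - ∫ v in (0:ℝ)..s, A v) := by
      rw [hE]; simp only []; rw [hErep s hsIcc]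
    rw [show -A s * E s = -A s * Real.exp (I0 - ∫ v in (0:ℝ)..s, A v) by rw [heq]]
    refine hexp.congr_of_eventuallyEq ?_
    filter_upwards [Ioo_mem_nhds hs.1 hs.2] with u hu
    rw [hE]; simp only []; rw [hErep u ⟨hu.1.le, hu.2.le⟩]
  -- integrability facts
  have hHaE_cont : ContinuousOn HaE (Icc 0 t) :=
    ((hHcont.continuousOn.mul (hAc.mono hIccIci)).mul hEc)
  have hHaE_int : IntervalIntegrable HaE volume 0 t :=
    ContinuousOn.intervalIntegrable (by rwa [uIcc_of_le ht])
  have hEIoc : IntegrableOn E (Ioc 0 t) volume :=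
    (hEc.integrableOn_Icc).mono_set Ioc_subset_Icc_self
  have hterm1_int : IntervalIntegrable term1 volume 0 t := by
    rw [intervalIntegrable_iff_integrableOn_Ioc_of_le ht]
    have haesm : AEStronglyMeasurable term1 (volume.restrict (Ioc 0 t)) := by
      apply AEStronglyMeasurable.mul _ hE_aesm
      exact (hgπ_meas.mul
        ((measurable_id.sub (measurable_piD hδ)).sub_const (δ/2))).aestronglyMeasurable
    refine Integrable.mono' (g := fun s => Cg * δ * E s) (hEIoc.const_mul _) haesm ?_
    refine (ae_restrict_iff' measurableSet_Ioc).2 (ae_of_all _ ?_)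
    intro s _
    have h1 : piD δ s ≤ s := piD_le hδ s
    have h2 : s < piD δ s + δ := lt_piD_add hδ s
    have h3 : |s - piD δ s - δ/2| ≤ δ := by
      rw [abs_le]; constructor <;> nlinarith
    calc ‖term1 s‖ = |g (piD δ s)| * |s - piD δ s - δ/2| * E s := by
          rw [hterm1]; simp only []
          rw [Real.norm_eq_abs, abs_mul, abs_mul, abs_of_pos (hEpos s)]
    _ ≤ Cg * δ * E s := by
          apply mul_le_mul _ le_rfl (hEpos s).le (by positivity)
          exact mul_le_mul (hgbd _) h3 (abs_nonneg _) hCg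
  have hdif_int : IntervalIntegrable dif volume 0 t := by
    rw [intervalIntegrable_iff_integrableOn_Ioc_of_le ht]
    have haesm : AEStronglyMeasurable dif (volume.restrict (Ioc 0 t)) := by
      apply AEStronglyMeasurable.mul _ hE_aesm
      exact (hgπ_meas.aestronglyMeasurable).sub
        ((hgc.mono (fun z hz => hz.1.le)).aestronglyMeasurable measurableSet_Ioc)
    refine Integrable.mono' (g := fun s => Lg * δ * E s) (hEIoc.const_mul _) haesm ?_
    refine (ae_restrict_iff' measurableSet_Ioc).2 (ae_of_all _ ?_)
    intro s hs
    have h1 : piD δ s ≤ s := piD_le hδ s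
    have h2 : s < piD δ s + δ := lt_piD_add hδ s
    have hglb : |g (piD δ s) - g s| ≤ Lg * δ := by
      have := hglip (piD δ s) s (piD_nonneg hδ hs.1.le) hs.1.le
      have h4 : |piD δ s - s| ≤ δ := by rw [abs_le]; constructor <;> nlinarith
      nlinarith [abs_nonneg (piD δ s - s)]
    calc ‖dif s‖ = |g (piD δ s) - g s| * E s := by
          rw [hdif]; simp only []
          rw [Real.norm_eq_abs, abs_mul, abs_of_pos (hEpos s)]
    _ ≤ Lg * δ * E s := mul_le_mul_of_nonneg_right hglb (hEpos s).le
  have hF'_int : IntervalIntegrable F' volume 0 t := hterm1_int.sub hHaE_int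
  -- FTC
  have hEt : E t = 1 := by
    rw [hE]; simp only []; rw [intervalIntegral.integral_same, Real.exp_zero]
  have hH0 : H 0 = 0 := by
    rw [hH, hψ]; simp only []; rw [piD_zero]; ring
  have hFTC : (∫ s in (0:ℝ)..t, F' s) = H t := by
    have hD : (Set.range (fun k : ℤ => (δ * k : ℝ))).Countable := Set.countable_range _
    have := MeasureTheory.integral_eq_of_hasDerivAt_off_countable_of_le
      (fun s => H s * E s) F' ht hD (hHcont.continuousOn.mul hEc) ?_ hF'_int
    · rw [this]
      show H t * E t - H 0 * E 0 = H t
      rw [hEt, hH0]; ring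
    · intro s hsd
      obtain ⟨hsIoo, hsD⟩ := hsd
      have hps : piD δ s ≠ s := by
        intro h
        exact hsD ⟨⌊s / δ⌋, h⟩
      have h1 := hH_deriv s hps
      have h2 := hE_deriv s hsIoo
      have h3 := h1.mul h2
      refine h3.congr_deriv ?_
      rw [hF', hterm1, hHaE]
      simp only []
      ring
  -- split term1 integral
  have hsplit : (∫ s in (0:ℝ)..t, term1 s) = H t + ∫ s in (0:ℝ)..t, HaE s := by
    have heq : ∀ s : ℝ, term1 s = F' s + HaE s := fun s => by rw [hF']; ring
    rw [intervalIntegral.integral_congr (g := fun s => F' s + HaE s) (fun s _ => heq s)]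
    rw [intervalIntegral.integral_add hF'_int hHaE_int, hFTC]
  -- bounds
  have hHb : ∀ s : ℝ, |H s| ≤ Cg * (δ^2/8) := by
    intro s
    calc |H s| = |g (piD δ s)| * |ψ s| := by rw [hH]; exact abs_mul _ _
    _ ≤ Cg * (δ^2/8) := mul_le_mul (hgbd _) (psi_global s hδ) (abs_nonneg _) hCg
  have hEInonneg : 0 ≤ ∫ s in (0:ℝ)..t, E s :=
    intervalIntegral.integral_nonneg ht (fun s _ => (hEpos s).le)
  have habsE : ∀ c : ℝ, 0 ≤ c → |∫ s in (0:ℝ)..t, c * E s| ≤ c * Cstar := by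
    intro c hc
    rw [intervalIntegral.integral_const_mul, abs_of_nonneg (mul_nonneg hc hEInonneg)]
    exact mul_le_mul_of_nonneg_left hEint hc
  have hInt2 : |∫ s in (0:ℝ)..t, HaE s| ≤ Cg * (δ^2/8) * M * Cstar := by
    have hb : ∀ᵐ s ∂volume.restrict (Set.uIoc 0 t), ‖HaE s‖ ≤ (Cg * (δ^2/8) * M) * E s := by
      rw [uIoc_of_le ht]
      refine (ae_restrict_iff' measurableSet_Ioc).2 (ae_of_all _ ?_)
      intro s hs
      calc ‖HaE s‖ = |H s| * |A s| * E s := by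
            rw [hHaE]; simp only []
            rw [Real.norm_eq_abs, abs_mul, abs_mul, abs_of_pos (hEpos s)]
      _ ≤ Cg * (δ^2/8) * M * E s := by
            apply mul_le_mul _ le_rfl (hEpos s).le (by positivity)
            exact mul_le_mul (hHb s) (hAbd s hs.1.le) (abs_nonneg _) (by positivity)
    have h1 := intervalIntegral.norm_integral_le_abs_of_norm_le hb (hE_int.const_mul _)
    calc |∫ s in (0:ℝ)..t, HaE s| ≤ |∫ s in (0:ℝ)..t, (Cg * (δ^2/8) * M) * E s| := h1
    _ ≤ Cg * (δ^2/8) * M * Cstar := habsE _ (by positivity)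
  have hInt3 : |∫ s in (0:ℝ)..t, dif s| ≤ Lg * δ * Cstar := by
    have hb : ∀ᵐ s ∂volume.restrict (Set.uIoc 0 t), ‖dif s‖ ≤ (Lg * δ) * E s := by
      rw [uIoc_of_le ht]
      refine (ae_restrict_iff' measurableSet_Ioc).2 (ae_of_all _ ?_)
      intro s hs
      have h1 : piD δ s ≤ s := piD_le hδ s
      have h2 : s < piD δ s + δ := lt_piD_add hδ s
      have hglb : |g (piD δ s) - g s| ≤ Lg * δ := by
        have := hglip (piD δ s) s (piD_nonneg hδ hs.1.le) hs.1.le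
        have h4 : |piD δ s - s| ≤ δ := by rw [abs_le]; constructor <;> nlinarith
        nlinarith [abs_nonneg (piD δ s - s)]
      calc ‖dif s‖ = |g (piD δ s) - g s| * E s := by
            rw [hdif]; simp only []
            rw [Real.norm_eq_abs, abs_mul, abs_of_pos (hEpos s)]
      _ ≤ Lg * δ * E s := mul_le_mul_of_nonneg_right hglb (hEpos s).le
    have h1 := intervalIntegral.norm_integral_le_abs_of_norm_le hb (hE_int.const_mul _)
    calc |∫ s in (0:ℝ)..t, dif s| ≤ |∫ s in (0:ℝ)..t, (Lg * δ) * E s| := h1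
    _ ≤ Lg * δ * Cstar := habsE _ (by positivity)
  have hterm1b : |∫ s in (0:ℝ)..t, term1 s| ≤ Cg * (δ^2/8) + Cg * (δ^2/8) * M * Cstar := by
    rw [hsplit]
    exact (abs_add_le _ _).trans (add_le_add (hHb t) hInt2)
  -- main splitting
  have hmain : (∫ s in (0:ℝ)..t, ((1/ε) * g (piD δ s) * (s - piD δ s) - δ/(2*ε) * g s) * E s)
      = (1/ε) * (∫ s in (0:ℝ)..t, term1 s) + (δ/(2*ε)) * (∫ s in (0:ℝ)..t, dif s) := by
    rw [← intervalIntegral.integral_const_mul, ← intervalIntegral.integral_const_mul,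
      ← intervalIntegral.integral_add (hterm1_int.const_mul _) (hdif_int.const_mul _)]
    apply intervalIntegral.integral_congr
    intro s _
    rw [hterm1, hdif]
    simp only []
    field_simp
    ring
  calc |∫ s in (0:ℝ)..t, ((1/ε) * g (piD δ s) * (s - piD δ s) - δ/(2*ε) * g s) * E s|
      ≤ (1/ε) * |∫ s in (0:ℝ)..t, term1 s| + (δ/(2*ε)) * |∫ s in (0:ℝ)..t, dif s| := by
        rw [hmain]
        refine (abs_add_le _ _).trans ?_
        rw [abs_mul, abs_mul, abs_of_pos (by positivity : (0:ℝ) < 1/ε),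
          abs_of_pos (by positivity : (0:ℝ) < δ/(2*ε))]
  _ ≤ (1/ε) * (Cg * (δ^2/8) + Cg * (δ^2/8) * M * Cstar) + (δ/(2*ε)) * (Lg * δ * Cstar) := by
        exact add_le_add (mul_le_mul_of_nonneg_left hterm1b (by positivity))
          (mul_le_mul_of_nonneg_left hInt3 (by positivity))
  _ = (Cg/8 * (1 + M * Cstar) + Lg * Cstar / 2) * δ^2 / ε := alg_id Cg M Cstar Lg δ ε hε

lemma wellposed (f κ : ℝ → ℝ) (x₀ : ℝ) (x : ℝ → ℝ) (lam γ R : ℝ)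
    (hlam : 0 < lam) (hγ : 0 < γ)
    (hcontr0 : ∀ a : ℝ, a * (f a - f 0) ≤ -lam * a ^ 2)
    (hκbd : ∀ a : ℝ, |κ a| ≤ γ)
    (hfc : Continuous f) (hκc : Continuous κ)
    (hx : ∀ t : ℝ, 0 ≤ t → x t = x₀ + ∫ s in (0:ℝ)..t, (f (x s) + κ (x s)))
    (hR : R = |x₀| + (|f 0| + γ) / lam + 1) :
    (∀ t : ℝ, 0 ≤ t → IntervalIntegrable (fun s => f (x s) + κ (x s)) volume 0 t)
      ∧ ContinuousOn x (Ici 0) ∧ ∀ s : ℝ, 0 ≤ s → |x s| ≤ R := by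
  set G : ℝ → ℝ := fun s => f (x s) + κ (x s) with hG
  have hx0 : x 0 = x₀ := by simpa using hx 0 le_rfl
  have hfγpos : 0 ≤ (|f 0| + γ) / lam := by positivity
  have hxR : |x₀| ≤ R := by rw [hR]; linarith
  have hRpos : (0:ℝ) < R := by rw [hR]; positivity
  have hlamR : lam * R = lam * |x₀| + (|f 0| + γ) + lam := by
    rw [hR]; field_simp
  -- Step A : regularity and a priori bound on [0,T] given integrability on [0,T]
  have stepA : ∀ T : ℝ, 0 ≤ T → IntervalIntegrable G volume 0 T →
      ContinuousOn x (Icc 0 T) ∧ ∀ s ∈ Icc 0 T, |x s| ≤ R := by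
    intro T hT hi
    have hxc : ContinuousOn x (Icc 0 T) := by
      have hIcc : IntegrableOn G (uIcc 0 T) := by
        rw [uIcc_of_le hT]
        exact (intervalIntegrable_iff_integrableOn_Icc_of_le hT).1 hi
      have hP : ContinuousOn (fun u => x₀ + ∫ v in (0:ℝ)..u, G v) (Icc 0 T) := by
        have := (continuousOn_primitive_interval hIcc)
        rw [uIcc_of_le hT] at this
        exact continuousOn_const.add this
      exact hP.congr (fun u hu => hx u hu.1)
    refine ⟨hxc, ?_⟩
    intro s1 hs1
    by_contra habs
    push_neg at habs
    have hGc : ContinuousOn G (Icc 0 T) :=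
      (hfc.comp_continuousOn hxc).add (hκc.comp_continuousOn hxc)
    have hderiv : ∀ s ∈ Ioo 0 T, HasDerivAt x (G s) s := by
      intro s hsm
      have hca : ContinuousAt G s := hGc.continuousAt (Icc_mem_nhds hsm.1 hsm.2)
      have hmeasf : StronglyMeasurableAtFilter G (𝓝 s) volume :=
        ContinuousAt.stronglyMeasurableAtFilter isOpen_Ioo
          (fun u hu => hGc.continuousAt (Icc_mem_nhds hu.1 hu.2)) s hsm
      have hint0s : IntervalIntegrable G volume 0 s := by
        apply hi.mono_set
        rw [uIcc_of_le hT, uIcc_of_le hsm.1.le]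
        exact Icc_subset_Icc le_rfl hsm.2.le
      have hprim : HasDerivAt (fun u => x₀ + ∫ v in (0:ℝ)..u, G v) (G s) s :=
        (intervalIntegral.integral_hasDerivAt_right hint0s hmeasf hca).const_add x₀
      refine hprim.congr_of_eventuallyEq ?_
      filter_upwards [Ioi_mem_nhds hsm.1] with u hu
      exact hx u (le_of_lt hu)
    rcases lt_or_ge R (x s1) with hcase | hcase
    · -- upper escape
      set S := {u : ℝ | u ∈ Icc 0 s1 ∧ x u ≤ R} with hSdef
      have hS0 : (0:ℝ) ∈ S := ⟨⟨le_rfl, hs1.1⟩, by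
        rw [hx0]; exact le_trans (le_abs_self _) hxR⟩
      have hSbdd : BddAbove S := ⟨s1, fun u hu => hu.1.2⟩
      have hSclosed : IsClosed S := by
        have : S = Icc 0 s1 ∩ x ⁻¹' (Iic R) := by ext u; simp [hSdef, and_comm]
        rw [this]
        exact (hxc.mono (Icc_subset_Icc le_rfl hs1.2)).preimage_isClosed_of_isClosed
          isClosed_Icc isClosed_Iic
      set s₂ := sSup S with hs₂def
      have hs2mem : s₂ ∈ S := hSclosed.csSup_mem ⟨0, hS0⟩ hSbdd
      have hs2lt : s₂ < s1 := by
        rcases lt_or_eq_of_le hs2mem.1.2 with h | h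
        · exact h
        · rw [h] at hs2mem; linarith [hs2mem.2]
      have hgt : ∀ u, s₂ < u → u ≤ s1 → R < x u := by
        intro u h1 h2
        by_contra hc
        push_neg at hc
        have : u ∈ S := ⟨⟨le_trans hs2mem.1.1 h1.le, h2⟩, hc⟩
        exact absurd (le_csSup hSbdd this) (not_le.2 h1)
      have hanti : StrictAntiOn x (Icc s₂ s1) := by
        apply strictAntiOn_of_deriv_neg (convex_Icc _ _)
          (hxc.mono (Icc_subset_Icc hs2mem.1.1 hs1.2))
        intro u hu
        rw [interior_Icc] at hu
        have huIoo : u ∈ Ioo 0 T :=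
          ⟨lt_of_le_of_lt hs2mem.1.1 hu.1, lt_of_lt_of_le hu.2 hs1.2⟩
        rw [(hderiv u huIoo).deriv]
        have hxu : R < x u := hgt u hu.1 hu.2.le
        have hxupos : 0 < x u := lt_trans hRpos hxu
        have hc := hcontr0 (x u)
        have hfb : f (x u) - f 0 ≤ -lam * x u := by nlinarith
        have hκb := (abs_le.1 (hκbd (x u))).2
        have hf0 : f 0 ≤ |f 0| := le_abs_self _
        have hax : 0 ≤ |x₀| := abs_nonneg _
        show f (x u) + κ (x u) < 0
        nlinarith
      have hlt := hanti (left_mem_Icc.2 hs2lt.le) (right_mem_Icc.2 hs2lt.le) hs2lt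
      linarith [hs2mem.2]
    · -- lower escape
      have hneg : x s1 < -R := by
        rcases abs_cases (x s1) with ⟨h1, _⟩ | ⟨h1, _⟩
        · linarith
        · linarith
      set S := {u : ℝ | u ∈ Icc 0 s1 ∧ -R ≤ x u} with hSdef
      have hS0 : (0:ℝ) ∈ S := ⟨⟨le_rfl, hs1.1⟩, by
        rw [hx0]; linarith [neg_abs_le x₀]⟩
      have hSbdd : BddAbove S := ⟨s1, fun u hu => hu.1.2⟩
      have hSclosed : IsClosed S := by
        have : S = Icc 0 s1 ∩ x ⁻¹' (Ici (-R)) := by ext u; simp [hSdef, and_comm]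
        rw [this]
        exact (hxc.mono (Icc_subset_Icc le_rfl hs1.2)).preimage_isClosed_of_isClosed
          isClosed_Icc isClosed_Ici
      set s₂ := sSup S with hs₂def
      have hs2mem : s₂ ∈ S := hSclosed.csSup_mem ⟨0, hS0⟩ hSbdd
      have hs2lt : s₂ < s1 := by
        rcases lt_or_eq_of_le hs2mem.1.2 with h | h
        · exact h
        · rw [h] at hs2mem; linarith [hs2mem.2]
      have hgt : ∀ u, s₂ < u → u ≤ s1 → x u < -R := by
        intro u h1 h2
        by_contra hc
        push_neg at hc
        have : u ∈ S := ⟨⟨le_trans hs2mem.1.1 h1.le, h2⟩, hc⟩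
        exact absurd (le_csSup hSbdd this) (not_le.2 h1)
      have hmono : StrictMonoOn x (Icc s₂ s1) := by
        apply strictMonoOn_of_deriv_pos (convex_Icc _ _)
          (hxc.mono (Icc_subset_Icc hs2mem.1.1 hs1.2))
        intro u hu
        rw [interior_Icc] at hu
        have huIoo : u ∈ Ioo 0 T :=
          ⟨lt_of_le_of_lt hs2mem.1.1 hu.1, lt_of_lt_of_le hu.2 hs1.2⟩
        rw [(hderiv u huIoo).deriv]
        have hxu : x u < -R := hgt u hu.1 hu.2.le
        have hxuneg : x u < 0 := by linarith
        have hc := hcontr0 (x u)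
        have hfb : -lam * x u ≤ f (x u) - f 0 := by nlinarith
        have hκb := (abs_le.1 (hκbd (x u))).1
        have hf0 : -|f 0| ≤ f 0 := neg_abs_le _
        have hax : 0 ≤ |x₀| := abs_nonneg _
        show 0 < f (x u) + κ (x u)
        nlinarith
      have hlt := hmono (left_mem_Icc.2 hs2lt.le) (right_mem_Icc.2 hs2lt.le) hs2lt
      linarith [hs2mem.2]
  -- Step B : integrability on all of [0,∞)
  have hint_all : ∀ t : ℝ, 0 ≤ t → IntervalIntegrable G volume 0 t := by
    by_contra hcon
    push_neg at hcon
    obtain ⟨t₀, ht₀, hni⟩ := hcon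
    set N := {t : ℝ | 0 ≤ t ∧ ¬ IntervalIntegrable G volume 0 t} with hNdef
    have hNne : N.Nonempty := ⟨t₀, ht₀, hni⟩
    have hNbdd : BddBelow N := ⟨0, fun u hu => hu.1⟩
    set T := sInf N with hTdef
    have hT0 : 0 ≤ T := le_csInf hNne (fun u hu => hu.1)
    have hgood : ∀ u, 0 ≤ u → u < T → IntervalIntegrable G volume 0 u := by
      intro u hu hlt; by_contra hni'
      exact absurd (csInf_le hNbdd ⟨hu, hni'⟩) (not_le.2 hlt)
    have hup : ∀ u, T < u → ¬ IntervalIntegrable G volume 0 u := by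
      intro u hu hint'
      obtain ⟨v, hvN, hv⟩ := (csInf_lt_iff hNbdd hNne).1 hu
      refine hvN.2 (hint'.mono_set ?_)
      rw [uIcc_of_le hvN.1, uIcc_of_le (le_trans hvN.1 hv.le)]
      exact Icc_subset_Icc le_rfl hv.le
    have hbad : ∀ u, T < u → x u = x₀ := by
      intro u hu
      rw [hx u (le_trans hT0 hu.le), intervalIntegral.integral_undef (hup u hu), add_zero]
    have hxcI : ∀ s, 0 ≤ s → s < T → ContinuousWithinAt x (Ico 0 T) s ∧ |x s| ≤ R := by
      intro s hs hsT
      set u := (s + T) / 2 with hu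
      have hsu : s < u := by rw [hu]; linarith
      have huT : u < T := by rw [hu]; linarith
      have hu0 : 0 ≤ u := by linarith
      obtain ⟨hc, hb⟩ := stepA u hu0 (hgood u hu0 huT)
      refine ⟨?_, hb s ⟨hs, hsu.le⟩⟩
      refine (hc s ⟨hs, hsu.le⟩).mono_of_mem_nhdsWithin ?_
      exact mem_nhdsWithin.2 ⟨Iio u, isOpen_Iio, hsu, fun z hz => ⟨hz.2.1, hz.1.le⟩⟩
    obtain ⟨Cf, hCf⟩ :=
      (isCompact_Icc : IsCompact (Icc (-R) R)).exists_bound_of_continuousOn hfc.continuousOn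
    have hTI : IntervalIntegrable G volume 0 (T+1) := by
      rw [intervalIntegrable_iff_integrableOn_Ioc_of_le (by linarith)]
      have hsplit : Ioc 0 (T+1) ⊆ (Ioc 0 (T+1) ∩ Iio T) ∪ (Ioc 0 (T+1) ∩ Ici T) := by
        intro z hz
        rcases lt_or_ge z T with h | h
        · exact Or.inl ⟨hz, h⟩
        · exact Or.inr ⟨hz, h⟩
      refine (MeasureTheory.IntegrableOn.union ?_ ?_).mono_set hsplit
      · have hmeas : MeasurableSet (Ioc (0:ℝ) (T+1) ∩ Iio T) :=
          measurableSet_Ioc.inter measurableSet_Iio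
        have hGcI : ContinuousOn G (Ioc 0 (T+1) ∩ Iio T) := by
          intro z hz
          have h1 := (hxcI z hz.1.1.le hz.2).1
          have hxw : ContinuousWithinAt x (Ioc 0 (T+1) ∩ Iio T) z :=
            h1.mono (fun w hw => ⟨hw.1.1.le, hw.2⟩)
          exact (hfc.continuousAt.comp_continuousWithinAt hxw).add (hκc.continuousAt.comp_continuousWithinAt hxw)
        have hfin : volume (Ioc (0:ℝ) (T+1) ∩ Iio T) < ⊤ :=
          lt_of_le_of_lt (measure_mono inter_subset_left) measure_Ioc_lt_top
        refine Integrable.mono' (g := fun _ => Cf + γ)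
          (integrableOn_const hfin.ne) (hGcI.aestronglyMeasurable hmeas) ?_
        refine (ae_restrict_iff' hmeas).2 (ae_of_all _ ?_)
        intro z hz
        have hxz : |x z| ≤ R := (hxcI z hz.1.1.le hz.2).2
        have h1 : |f (x z)| ≤ Cf := hCf (x z) (abs_le.1 hxz)
        have h2 := hκbd (x z)
        calc ‖G z‖ = |f (x z) + κ (x z)| := rfl
          _ ≤ |f (x z)| + |κ (x z)| := abs_add_le _ _
          _ ≤ Cf + γ := by linarith
      · have hmeas : MeasurableSet (Ioc (0:ℝ) (T+1) ∩ Ici T) :=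
          measurableSet_Ioc.inter measurableSet_Ici
        have hfin : volume (Ioc (0:ℝ) (T+1) ∩ Ici T) < ⊤ :=
          lt_of_le_of_lt (measure_mono inter_subset_left) measure_Ioc_lt_top
        have hconst : IntegrableOn (fun _ : ℝ => f x₀ + κ x₀) (Ioc 0 (T+1) ∩ Ici T) volume :=
          integrableOn_const hfin.ne
        refine hconst.congr ?_
        have hTne : ∀ᵐ z : ℝ ∂volume, z ≠ T := by
          rw [ae_iff]
          have : {z : ℝ | ¬ z ≠ T} = {T} := by ext z; simp
          rw [this]
          exact Real.volume_singleton
        filter_upwards [ae_restrict_of_ae hTne, ae_restrict_mem hmeas] with z hzne hzmem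
        have hzT : T < z := lt_of_le_of_ne hzmem.2 (Ne.symm hzne)
        show f x₀ + κ x₀ = G z
        rw [hG]
        simp only []
        rw [hbad z hzT]
    exact hup (T+1) (by linarith) hTI
  refine ⟨hint_all, ?_, ?_⟩
  · intro s hs
    have hs' : (0:ℝ) ≤ s := hs
    obtain ⟨hc, _⟩ := stepA (s+1) (by linarith) (hint_all (s+1) (by linarith))
    refine (hc s ⟨hs', by linarith⟩).mono_of_mem_nhdsWithin ?_
    exact mem_nhdsWithin.2 ⟨Iio (s+1), isOpen_Iio, mem_Iio.mpr (lt_add_one s), fun z hz => ⟨hz.2, hz.1.le⟩⟩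
  · intro s hs
    exact (stepA s hs (hint_all s hs)).2 s ⟨hs, le_rfl⟩

set_option maxHeartbeats 2000000 in
/-- Uniform-in-time bound `|𝒮₂^{ε,δ}(t)|^p ≤ C·δ^{2p}/ε^p` where
`𝒮₂^{ε,δ}(t) = ∫₀ᵗ ((1/ε)·κ'(x(π_δ(s)))·κ(x(π_δ(s)))·(s − π_δ(s))
− (δ/(2ε))·κ'(x(s))·κ(x(s)))·E(s,t) ds`. -/
theorem stmt10
    (f κ : ℝ → ℝ) (x₀ : ℝ) (x : ℝ → ℝ)
    -- Assumption (A1)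
    (lam ξ μ Lκ γ : ℝ) (q : ℕ)
    (hlam : 0 < lam) (hξ : 0 < ξ) (hμ : 0 < μ) (hLκ : 0 < Lκ) (hγ : 0 < γ)
    (hcontr : ∀ a b : ℝ, (a - b) * (f a - f b) ≤ -lam * (a - b) ^ 2)
    (hfLip : ∀ a b : ℝ, |f a - f b| ≤ (ξ * (|a| ^ q + |b| ^ q) + μ) * |a - b|)
    (hκLip : ∀ a b : ℝ, |κ a - κ b| ≤ Lκ * |a - b|)
    (hgap : lam / 2 - Lκ > 0)
    (hκbd : ∀ a : ℝ, |κ a| ≤ γ)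
    -- Assumption (A3)
    (hfd : Differentiable ℝ f) (hfd2 : Differentiable ℝ (deriv f))
    (hκd : Differentiable ℝ κ) (hκd2 : Differentiable ℝ (deriv κ))
    (K : ℝ) (hK : ∀ y : ℝ, |deriv (deriv κ) y| ≤ K)
    (cf : ℝ) (rf : ℕ) (hf2 : ∀ y : ℝ, |deriv (deriv f) y| ≤ cf * (1 + |y| ^ rf))
    (Cstar : ℝ) (hCstar : 0 < Cstar)
    (hint : ∀ m : ℕ, (m = 1 ∨ m = 2) → ∀ t : ℝ, 0 ≤ t →
      (∫ s in (0:ℝ)..t,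
        Real.exp ((m : ℝ) * ∫ u in s..t, (deriv f (x u) + deriv κ (x u)))) ≤ Cstar)
    -- the closed-loop ODE `dx/dt = f(x) + κ(x)`, `x(0) = x₀`
    (hx : ∀ t : ℝ, 0 ≤ t → x t = x₀ + ∫ s in (0:ℝ)..t, (f (x s) + κ (x s)))
    :
    ∀ p : ℕ, 1 ≤ p → ∃ C : ℝ, 0 < C ∧
      ∀ ε δ : ℝ, 0 < ε → ε < 1 → 0 < δ → δ < 1 → ∀ t : ℝ, 0 ≤ t →
      |∫ s in (0:ℝ)..t,
          ((1 / ε) * deriv κ (x (piD δ s)) * κ (x (piD δ s)) * (s - piD δ s)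
            - (δ / (2 * ε)) * deriv κ (x s) * κ (x s)) *
            Real.exp (∫ u in s..t, (deriv f (x u) + deriv κ (x u)))| ^ p
        ≤ C * δ ^ (2 * p) / ε ^ p := by
  intro p hp
  -- derivative bounds
  have hκderiv : ∀ y : ℝ, |deriv κ y| ≤ Lκ := by
    intro y
    exact abs_deriv_le_of_slope_bound (hκd y) continuousAt_const (fun b => hκLip b y)
  have hfderiv : ∀ y : ℝ, |deriv f y| ≤ ξ * (|y| ^ q + |y| ^ q) + μ := by
    intro y
    refine abs_deriv_le_of_slope_bound (hfd y) ?_ (fun b => hfLip b y)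
    exact ((continuous_const.mul ((continuous_abs.pow q).add continuous_const)).add
      continuous_const).continuousAt
  have hK0 : 0 ≤ K := le_trans (abs_nonneg _) (hK 0)
  have hκlip2 : ∀ a b : ℝ, |deriv κ a - deriv κ b| ≤ K * |a - b| := by
    have hl : LipschitzWith K.toNNReal (deriv κ) := by
      apply lipschitzWith_of_nnnorm_deriv_le hκd2
      intro y
      rw [← NNReal.coe_le_coe]
      simpa [Real.coe_toNNReal K hK0] using hK y
    intro a b
    have := hl.dist_le_mul a b
    rwa [Real.dist_eq, Real.dist_eq, Real.coe_toNNReal K hK0] at this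
  -- well-posedness
  have hcontr0 : ∀ a : ℝ, a * (f a - f 0) ≤ -lam * a ^ 2 := fun a => by
    simpa using hcontr a 0
  set R : ℝ := |x₀| + (|f 0| + γ) / lam + 1 with hRdef
  obtain ⟨hGint, hxc, hxbd⟩ := wellposed f κ x₀ x lam γ R hlam hγ hcontr0 hκbd
    hfd.continuous hκd.continuous hx rfl
  have hR1 : (1:ℝ) ≤ R := by
    rw [hRdef]
    have h1 : 0 ≤ |x₀| := abs_nonneg _
    have h2 : 0 ≤ (|f 0| + γ) / lam := by positivity
    linarith
  have hR0 : (0:ℝ) ≤ R := by linarith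
  -- bound on the vector field along the trajectory
  set Bf : ℝ := |f 0| + (ξ * (R ^ q + 1) + μ) * R with hBf
  have hfbd : ∀ y : ℝ, |y| ≤ R → |f y| ≤ Bf := by
    intro y hy
    have h := hfLip y 0
    have h0q : |(0:ℝ)| ^ q ≤ 1 := by
      rcases Nat.eq_zero_or_pos q with hq | hq
      · simp [hq]
      · rw [abs_zero, zero_pow hq.ne']; norm_num
    have hyq : |y| ^ q ≤ R ^ q := pow_le_pow_left₀ (abs_nonneg y) hy q
    have h2 : |f y - f 0| ≤ (ξ * (R ^ q + 1) + μ) * R := by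
      refine le_trans h ?_
      rw [sub_zero]
      apply mul_le_mul _ hy (abs_nonneg y) (by positivity)
      nlinarith
    calc |f y| = |f 0 + (f y - f 0)| := by ring_nf
    _ ≤ |f 0| + |f y - f 0| := abs_add_le _ _
    _ ≤ Bf := by rw [hBf]; linarith
  set Lx : ℝ := Bf + γ with hLxdef
  have hBf0 : 0 ≤ Bf := by
    rw [hBf]
    have h7 : (0:ℝ) ≤ R ^ q := pow_nonneg hR0 q
    have h8 : 0 ≤ (ξ * (R ^ q + 1) + μ) * R := mul_nonneg (by nlinarith) hR0
    nlinarith [abs_nonneg (f 0)]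
  have hLx0 : 0 < Lx := by rw [hLxdef]; linarith
  have hGbd : ∀ s : ℝ, 0 ≤ s → |f (x s) + κ (x s)| ≤ Lx := by
    intro s hs
    calc |f (x s) + κ (x s)| ≤ |f (x s)| + |κ (x s)| := abs_add_le _ _
    _ ≤ Bf + γ := add_le_add (hfbd _ (hxbd s hs)) (hκbd _)
  -- Lipschitz bound for x on [0,∞)
  have hxlipkey : ∀ u v : ℝ, 0 ≤ u → u ≤ v → |x v - x u| ≤ Lx * (v - u) := by
    intro u v hu huv
    have hv : 0 ≤ v := le_trans hu huv
    have hdiff : x v - x u = ∫ s in u..v, (f (x s) + κ (x s)) := by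
      rw [hx v hv, hx u hu]
      have h1 : IntervalIntegrable (fun s => f (x s) + κ (x s)) volume 0 u := hGint u hu
      have h2 : IntervalIntegrable (fun s => f (x s) + κ (x s)) volume u v := by
        apply (hGint v hv).mono_set
        rw [uIcc_of_le hv, uIcc_of_le huv]
        exact Icc_subset_Icc hu le_rfl
      have h3 := intervalIntegral.integral_add_adjacent_intervals h1 h2
      linarith [h3]
    rw [hdiff]
    have h4 := intervalIntegral.norm_integral_le_of_norm_le_const
      (C := Lx) (f := fun s => f (x s) + κ (x s)) (a := u) (b := v) ?_
    · rwa [abs_of_nonneg (by linarith : (0:ℝ) ≤ v - u)] at h4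
    · intro z hz
      rw [uIoc_of_le huv] at hz
      exact hGbd z (le_trans hu hz.1.le)
  have hxlip : ∀ u v : ℝ, 0 ≤ u → 0 ≤ v → |x u - x v| ≤ Lx * |u - v| := by
    intro u v hu hv
    rcases le_total u v with h | h
    · rw [abs_sub_comm, abs_of_nonpos (by linarith : u - v ≤ 0)]
      have := hxlipkey u v hu h
      linarith [this]
    · rw [abs_of_nonneg (by linarith : (0:ℝ) ≤ u - v)]
      have := hxlipkey v u hv h
      linarith [this]
  -- the coefficient functions
  have hAc : ContinuousOn (fun u => deriv f (x u) + deriv κ (x u)) (Ici 0) :=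
    (hfd2.continuous.comp_continuousOn hxc).add (hκd2.continuous.comp_continuousOn hxc)
  set M : ℝ := 2 * ξ * R ^ q + μ + Lκ with hMdef
  have hM0 : 0 ≤ M := by rw [hMdef]; positivity
  have hAbd : ∀ u : ℝ, 0 ≤ u → |deriv f (x u) + deriv κ (x u)| ≤ M := by
    intro u hu
    have h1 := hfderiv (x u)
    have hyq : |x u| ^ q ≤ R ^ q := pow_le_pow_left₀ (abs_nonneg _) (hxbd u hu) q
    have h2 := hκderiv (x u)
    calc |deriv f (x u) + deriv κ (x u)| ≤ |deriv f (x u)| + |deriv κ (x u)| := abs_add_le _ _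
    _ ≤ M := by rw [hMdef]; nlinarith
  have hgc : ContinuousOn (fun s => deriv κ (x s) * κ (x s)) (Ici 0) :=
    (hκd2.continuous.comp_continuousOn hxc).mul (hκd.continuous.comp_continuousOn hxc)
  have hgbd : ∀ s : ℝ, |deriv κ (x s) * κ (x s)| ≤ Lκ * γ := by
    intro s
    rw [abs_mul]
    exact mul_le_mul (hκderiv _) (hκbd _) (abs_nonneg _) hLκ.le
  set Lg : ℝ := (K * γ + Lκ ^ 2) * Lx with hLgdef
  have hLg0 : 0 ≤ Lg := by rw [hLgdef]; positivity
  have hglip : ∀ u v : ℝ, 0 ≤ u → 0 ≤ v →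
      |deriv κ (x u) * κ (x u) - deriv κ (x v) * κ (x v)| ≤ Lg * |u - v| := by
    intro u v hu hv
    have h1 : deriv κ (x u) * κ (x u) - deriv κ (x v) * κ (x v)
        = (deriv κ (x u) - deriv κ (x v)) * κ (x u) + deriv κ (x v) * (κ (x u) - κ (x v)) := by
      ring
    have h2 := hκlip2 (x u) (x v)
    have h3 := hκLip (x u) (x v)
    have h4 := hxlip u v hu hv
    have h5 := hκbd (x u)
    have h6 := hκderiv (x v)
    calc |deriv κ (x u) * κ (x u) - deriv κ (x v) * κ (x v)|
        ≤ |deriv κ (x u) - deriv κ (x v)| * |κ (x u)|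
          + |deriv κ (x v)| * |κ (x u) - κ (x v)| := by
          rw [h1]; exact (abs_add_le _ _).trans (by rw [abs_mul, abs_mul])
    _ ≤ Lg * |u - v| := by
          have e1 : |deriv κ (x u) - deriv κ (x v)| * |κ (x u)| ≤ (K * |x u - x v|) * γ :=
            mul_le_mul h2 h5 (abs_nonneg _) (mul_nonneg hK0 (abs_nonneg _))
          have e2 : |deriv κ (x v)| * |κ (x u) - κ (x v)| ≤ Lκ * (Lκ * |x u - x v|) :=
            mul_le_mul h6 h3 (abs_nonneg _) hLκ.le
          have e0 : (0:ℝ) ≤ K * γ + Lκ ^ 2 := by nlinarith [sq_nonneg Lκ]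
          have e3 : (K * γ + Lκ ^ 2) * |x u - x v| ≤ (K * γ + Lκ ^ 2) * (Lx * |u - v|) :=
            mul_le_mul_of_nonneg_left h4 e0
          calc |deriv κ (x u) - deriv κ (x v)| * |κ (x u)|
              + |deriv κ (x v)| * |κ (x u) - κ (x v)|
              ≤ (K * |x u - x v|) * γ + Lκ * (Lκ * |x u - x v|) := add_le_add e1 e2
          _ = (K * γ + Lκ ^ 2) * |x u - x v| := by ring
          _ ≤ (K * γ + Lκ ^ 2) * (Lx * |u - v|) := e3
          _ = Lg * |u - v| := by rw [hLgdef]; ring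
  -- the constant
  set C₀ : ℝ := Lκ * γ / 8 * (1 + M * Cstar) + Lg * Cstar / 2 + 1 with hC₀def
  have hC₀pos : (0:ℝ) < C₀ := by
    rw [hC₀def]
    have hmc : 0 ≤ M * Cstar := mul_nonneg hM0 hCstar.le
    have h1 : 0 ≤ Lκ * γ / 8 * (1 + M * Cstar) :=
      mul_nonneg (by positivity) (by linarith)
    have h2 : 0 ≤ Lg * Cstar / 2 := by nlinarith [mul_nonneg hLg0 hCstar.le]
    linarith
  refine ⟨C₀ ^ p, pow_pos hC₀pos p, ?_⟩
  intro ε δ hε hε1 hδ hδ1 t ht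
  have hEint : (∫ s in (0:ℝ)..t,
      Real.exp (∫ u in s..t, (deriv f (x u) + deriv κ (x u)))) ≤ Cstar := by
    have h := hint 1 (Or.inl rfl) t ht
    simpa using h
  have hb := S2_bound (fun u => deriv f (x u) + deriv κ (x u))
    (fun s => deriv κ (x s) * κ (x s)) t δ ε (Lκ * γ) Lg M Cstar
    ht hδ hε (by positivity) hLg0 hM0 hCstar.le hAc hAbd hgc hgbd hglip hEint
  have hrw : (∫ s in (0:ℝ)..t,
      ((1 / ε) * deriv κ (x (piD δ s)) * κ (x (piD δ s)) * (s - piD δ s)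
        - (δ / (2 * ε)) * deriv κ (x s) * κ (x s)) *
        Real.exp (∫ u in s..t, (deriv f (x u) + deriv κ (x u))))
      = ∫ s in (0:ℝ)..t,
      ((1/ε) * ((fun s => deriv κ (x s) * κ (x s)) (piD δ s)) * (s - piD δ s)
        - δ/(2*ε) * ((fun s => deriv κ (x s) * κ (x s)) s)) *
        Real.exp (∫ u in s..t, (deriv f (x u) + deriv κ (x u))) := by
    apply intervalIntegral.integral_congr
    intro s _
    simp only []
    ring
  have hS : |∫ s in (0:ℝ)..t,
      ((1 / ε) * deriv κ (x (piD δ s)) * κ (x (piD δ s)) * (s - piD δ s)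
        - (δ / (2 * ε)) * deriv κ (x s) * κ (x s)) *
        Real.exp (∫ u in s..t, (deriv f (x u) + deriv κ (x u)))|
      ≤ C₀ * δ ^ 2 / ε := by
    rw [hrw]
    refine le_trans hb ?_
    have h1 : Lκ * γ / 8 * (1 + M * Cstar) + Lg * Cstar / 2 ≤ C₀ := by
      rw [hC₀def]; linarith
    have h2 : (0:ℝ) ≤ δ ^ 2 := sq_nonneg δ
    rw [div_le_div_iff_of_pos_right hε]
    nlinarith
  calc |∫ s in (0:ℝ)..t,
      ((1 / ε) * deriv κ (x (piD δ s)) * κ (x (piD δ s)) * (s - piD δ s)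
        - (δ / (2 * ε)) * deriv κ (x s) * κ (x s)) *
        Real.exp (∫ u in s..t, (deriv f (x u) + deriv κ (x u)))| ^ p
      ≤ (C₀ * δ ^ 2 / ε) ^ p := pow_le_pow_left₀ (abs_nonneg _) hS p
  _ = C₀ ^ p * δ ^ (2 * p) / ε ^ p := by rw [div_pow, mul_pow, pow_mul]
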